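/- arXiv:0811.3479 — 6 statements merged into one kernel-verified Lean document; each statement's English description precedes it below -/
import Mathlib

section
/- The number of unordered factorizations of a natural number depends only on the multiset of exponents in its prime factorization: if p, q : Fin k → ℕ are injective functions with p i and q i prime for every i, and a : Fin k → ℕ, then p*(∏_{i} (p i)^{a i}) = p*(∏_{i} (q i)^{a i}). -/
/-- The number of unordered factorizations of `m`: the number of multisets of
natural numbers, all at least `2`, whose product is `m`. -/
noncomputable def numFactorizations (m : ℕ) : ℕ :=
  Nat.card {s : Multiset ℕ // (∀ x ∈ s, 2 ≤ x) ∧ s.prod = m}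

section Aux

variable {k : ℕ}

/-- Relabel the primes `p i` in the factorization of `n` by `q i`. -/
def relabel (p q : Fin k → ℕ) (n : ℕ) : ℕ := ∏ i, (q i) ^ (n.factorization (p i))

lemma factorization_prod_pow (q : Fin k → ℕ) (hq : ∀ i, (q i).Prime)
    (hqinj : Function.Injective q) (e : Fin k → ℕ) (j : Fin k) :
    (∏ i, q i ^ e i).factorization (q j) = e j := by
  rw [Nat.factorization_prod (fun i _ => pow_ne_zero _ (hq i).ne_zero)]
  rw [Finset.sum_apply']
  rw [Finset.sum_eq_single j]
  · rw [(hq j).factorization_pow, Finsupp.single_eq_same]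
  · intro i _ hij
    rw [(hq i).factorization_pow, Finsupp.single_eq_of_ne' (fun h => hij (hqinj h))]
  · simp

lemma eq_prod_pow_factorization (p : Fin k → ℕ) (hpinj : Function.Injective p)
    (x : ℕ) (hx : x ≠ 0) (hsupp : x.primeFactors ⊆ Finset.image p Finset.univ) :
    x = ∏ i, p i ^ x.factorization (p i) := by
  conv_lhs => rw [← Nat.factorization_prod_pow_eq_self hx]
  rw [Finsupp.prod]
  rw [Nat.support_factorization]
  rw [Finset.prod_subset hsupp (by
    intro r _ hr
    rw [← Nat.support_factorization, Finsupp.notMem_support_iff] at hr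
    simp [hr])]
  rw [Finset.prod_image (fun i _ j _ h => hpinj h)]

lemma relabel_one (p q : Fin k → ℕ) : relabel p q 1 = 1 := by
  simp [relabel]

lemma relabel_mul (p q : Fin k → ℕ) {x y : ℕ} (hx : x ≠ 0) (hy : y ≠ 0) :
    relabel p q (x * y) = relabel p q x * relabel p q y := by
  simp only [relabel, Nat.factorization_mul hx hy, Finsupp.add_apply, pow_add,
    Finset.prod_mul_distrib]

lemma relabel_ne_zero (p q : Fin k → ℕ) (hq : ∀ i, (q i).Prime) (n : ℕ) :
    relabel p q n ≠ 0 :=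
  Finset.prod_ne_zero_iff.2 fun i _ => pow_ne_zero _ (hq i).ne_zero

lemma relabel_relabel (p q : Fin k → ℕ)
    (hpinj : Function.Injective p) (hqinj : Function.Injective q)
    (hq : ∀ i, (q i).Prime)
    {x : ℕ} (hx : x ≠ 0) (hsupp : x.primeFactors ⊆ Finset.image p Finset.univ) :
    relabel q p (relabel p q x) = x := by
  unfold relabel
  calc ∏ j, p j ^ ((∏ i, q i ^ x.factorization (p i)).factorization (q j))
      = ∏ j, p j ^ x.factorization (p j) := by
        refine Finset.prod_congr rfl fun j _ => ?_
        rw [factorization_prod_pow q hq hqinj]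
    _ = x := (eq_prod_pow_factorization p hpinj x hx hsupp).symm

lemma primeFactors_subset (p : Fin k → ℕ) (hp : ∀ i, (p i).Prime) (a : Fin k → ℕ)
    {x : ℕ} (hdvd : x ∣ ∏ i, p i ^ a i) :
    x.primeFactors ⊆ Finset.image p Finset.univ := by
  intro r hr
  have hrp : r.Prime := Nat.prime_of_mem_primeFactors hr
  have hrdvd : r ∣ ∏ i, p i ^ a i :=
    (Nat.dvd_of_mem_primeFactors hr).trans hdvd
  obtain ⟨i, _, hi⟩ := hrp.prime.exists_mem_finset_dvd hrdvd
  have : r = p i := ((Nat.prime_dvd_prime_iff_eq hrp (hp i)).1 (hrp.dvd_of_dvd_pow hi))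
  simp [this]

lemma relabel_two_le (p q : Fin k → ℕ)
    (hpinj : Function.Injective p) (hqinj : Function.Injective q)
    (hq : ∀ i, (q i).Prime)
    {x : ℕ} (hx : 2 ≤ x) (hsupp : x.primeFactors ⊆ Finset.image p Finset.univ) :
    2 ≤ relabel p q x := by
  rcases Nat.lt_or_ge (relabel p q x) 2 with h | h
  · interval_cases h' : relabel p q x
    · exact absurd h' (relabel_ne_zero p q hq x)
    · have := relabel_relabel p q hpinj hqinj hq (by omega) hsupp
      rw [h', relabel_one] at this
      omega
  · exact h

lemma relabel_multiset_prod (p q : Fin k → ℕ) (hq : ∀ i, (q i).Prime)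
    (s : Multiset ℕ) (hs : ∀ x ∈ s, 2 ≤ x) :
    (s.map (relabel p q)).prod = relabel p q s.prod := by
  induction s using Multiset.induction with
  | empty => simp [relabel_one]
  | cons a t ih =>
    have ha : a ≠ 0 := by have := hs a (Multiset.mem_cons_self a t); omega
    have ht : t.prod ≠ 0 := by
      refine Multiset.prod_ne_zero fun h0 => ?_
      have := hs 0 (Multiset.mem_cons_of_mem h0); omega
    rw [Multiset.map_cons, Multiset.prod_cons, Multiset.prod_cons,
      relabel_mul p q ha ht, ih (fun x hx => hs x (Multiset.mem_cons_of_mem hx))]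

lemma relabel_prod_eq (p q : Fin k → ℕ)
    (hpinj : Function.Injective p) (hp : ∀ i, (p i).Prime)
    (a : Fin k → ℕ) :
    relabel p q (∏ i, p i ^ a i) = ∏ i, q i ^ a i := by
  unfold relabel
  refine Finset.prod_congr rfl fun i _ => ?_
  rw [factorization_prod_pow p hp hpinj]

end Aux

/-- The number of unordered factorizations depends only on the
exponents in the prime factorization: if `p` and `q` are injective families of
primes and `a` is any exponent vector, then
`p*(∏ i, (p i) ^ (a i)) = p*(∏ i, (q i) ^ (a i))`. -/
theorem stmt4 (k : ℕ) (p q : Fin k → ℕ)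
    (hpinj : Function.Injective p) (hqinj : Function.Injective q)
    (hp : ∀ i, (p i).Prime) (hq : ∀ i, (q i).Prime) (a : Fin k → ℕ) :
    numFactorizations (∏ i, (p i) ^ (a i)) =
      numFactorizations (∏ i, (q i) ^ (a i)) := by
  unfold numFactorizations
  refine Nat.card_congr ?_
  have key : ∀ (p q : Fin k → ℕ), Function.Injective p → Function.Injective q →
      (∀ i, (p i).Prime) → (∀ i, (q i).Prime) →
      ∀ (s : Multiset ℕ), (∀ x ∈ s, 2 ≤ x) → s.prod = ∏ i, p i ^ a i →
      (∀ x ∈ s.map (relabel p q), 2 ≤ x) ∧ (s.map (relabel p q)).prod = ∏ i, q i ^ a i := by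
    intro p q hpinj hqinj hp hq s hs hsprod
    have hsupp : ∀ x ∈ s, x.primeFactors ⊆ Finset.image p Finset.univ := by
      intro x hx
      exact primeFactors_subset p hp a (hsprod ▸ Multiset.dvd_prod hx)
    constructor
    · intro y hy
      obtain ⟨x, hx, rfl⟩ := Multiset.mem_map.1 hy
      exact relabel_two_le p q hpinj hqinj hq (hs x hx) (hsupp x hx)
    · rw [relabel_multiset_prod p q hq s hs, hsprod, relabel_prod_eq p q hpinj hp a]
  have roundtrip : ∀ (p q : Fin k → ℕ), Function.Injective p → Function.Injective q →
      (∀ i, (p i).Prime) → (∀ i, (q i).Prime) →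
      ∀ (s : Multiset ℕ), (∀ x ∈ s, 2 ≤ x) → s.prod = ∏ i, p i ^ a i →
      (s.map (relabel p q)).map (relabel q p) = s := by
    intro p q hpinj hqinj hp hq s hs hsprod
    rw [Multiset.map_map]
    refine Multiset.map_congr rfl (fun x hx => ?_) |>.trans (Multiset.map_id s)
    exact relabel_relabel p q hpinj hqinj hq (by have := hs x hx; omega)
      (primeFactors_subset p hp a (hsprod ▸ Multiset.dvd_prod hx))
  exact
    { toFun := fun s => ⟨s.1.map (relabel p q),
        key p q hpinj hqinj hp hq s.1 s.2.1 s.2.2⟩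
      invFun := fun s => ⟨s.1.map (relabel q p),
        key q p hqinj hpinj hq hp s.1 s.2.1 s.2.2⟩
      left_inv := fun s => Subtype.ext
        (roundtrip p q hpinj hqinj hp hq s.1 s.2.1 s.2.2)
      right_inv := fun s => Subtype.ext
        (roundtrip q p hqinj hpinj hq hp s.1 s.2.1 s.2.2) }
end

section
/- Euler's recurrence for the partition function: for every natural number n, n · p(n) = ∑_{j=1}^{n} σ(j) · p(n − j), where σ(j) denotes the sum of all (positive) divisors of j and p(0) = 1. -/
open Finset Multiset

/-- Key bijection: partitions of `n - d*k` correspond to partitions of `n`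
containing the part `d` with multiplicity at least `k`. -/
def partEquiv (n d k : ℕ) (hd : 1 ≤ d) (hdk : d * k ≤ n) :
    Nat.Partition (n - d * k) ≃ {P : Nat.Partition n // k ≤ Multiset.count d P.parts} where
  toFun μ := ⟨⟨μ.parts + Multiset.replicate k d,
      fun hi => by
        rcases Multiset.mem_add.1 hi with h | h
        · exact μ.parts_pos h
        · rw [Multiset.eq_of_mem_replicate h]; exact hd,
      by
        rw [Multiset.sum_add, μ.parts_sum, Multiset.sum_replicate, smul_eq_mul,
          mul_comm k d]
        omega⟩,
    by simp⟩
  invFun P := ⟨P.1.parts - Multiset.replicate k d,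
    fun hi => P.1.parts_pos (Multiset.mem_of_le (Multiset.sub_le_self _ _) hi),
    by
      have hle : Multiset.replicate k d ≤ P.1.parts :=
        Multiset.le_count_iff_replicate_le.1 P.2
      have h1 : (P.1.parts - Multiset.replicate k d) + Multiset.replicate k d = P.1.parts :=
        tsub_add_cancel_of_le hle
      have := congrArg Multiset.sum h1
      rw [Multiset.sum_add, Multiset.sum_replicate, smul_eq_mul, P.1.parts_sum, mul_comm k d] at this
      omega⟩
  left_inv μ := by
    ext1
    simp
  right_inv P := by
    have hle : Multiset.replicate k d ≤ P.1.parts :=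
      Multiset.le_count_iff_replicate_le.1 P.2
    ext1; ext1
    simp [tsub_add_cancel_of_le hle]

lemma count_mul_le (n : ℕ) (P : Nat.Partition n) (d : ℕ) :
    Multiset.count d P.parts * d ≤ n := by
  have h : Multiset.replicate (Multiset.count d P.parts) d ≤ P.parts :=
    Multiset.le_count_iff_replicate_le.1 le_rfl
  obtain ⟨u, hu⟩ := Multiset.le_iff_exists_add.1 h
  have h2 := congrArg Multiset.sum hu
  rw [Multiset.sum_add, Multiset.sum_replicate, smul_eq_mul, P.parts_sum] at h2
  omega

lemma card_part (n d k : ℕ) (hd : 1 ≤ d) (hdk : d * k ≤ n) :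
    Nat.card (Nat.Partition (n - d * k)) =
      (Finset.univ.filter fun P : Nat.Partition n => k ≤ Multiset.count d P.parts).card := by
  rw [Nat.card_congr (partEquiv n d k hd hdk), Nat.card_eq_fintype_card,
    Fintype.card_subtype]

lemma sumA (n : ℕ) (P : Nat.Partition n) :
    ∑ p ∈ (Finset.Icc 1 n ×ˢ Finset.Icc 1 n).filter
        (fun p : ℕ × ℕ => p.2 ≤ Multiset.count p.1 P.parts), p.1 = n := by
  rw [Finset.sum_filter, Finset.sum_product]
  have hinner : ∀ d ∈ Finset.Icc 1 n,
      (∑ k ∈ Finset.Icc 1 n, if k ≤ Multiset.count d P.parts then d else 0)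
        = Multiset.count d P.parts * d := by
    intro d hd
    have hd1 : 1 ≤ d := (Finset.mem_Icc.1 hd).1
    have hcn : Multiset.count d P.parts ≤ n :=
      le_trans (Nat.le_mul_of_pos_right _ hd1) (count_mul_le n P d)
    rw [← Finset.sum_filter]
    have heq : (Finset.Icc 1 n).filter (fun k => k ≤ Multiset.count d P.parts)
        = Finset.Icc 1 (Multiset.count d P.parts) := by
      ext k
      simp only [Finset.mem_filter, Finset.mem_Icc]
      omega
    rw [heq, Finset.sum_const, Nat.card_Icc, smul_eq_mul]
    congr 1
  rw [Finset.sum_congr rfl hinner]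
  have hsub : P.parts.toFinset ⊆ Finset.Icc 1 n := by
    intro d hd
    rw [Multiset.mem_toFinset] at hd
    refine Finset.mem_Icc.2 ⟨P.parts_pos hd, ?_⟩
    calc d ≤ Multiset.count d P.parts * d :=
          Nat.le_mul_of_pos_left _ (Multiset.count_pos.2 hd)
      _ ≤ n := count_mul_le n P d
  rw [← Finset.sum_subset hsub (by
    intro x _ hx
    rw [Multiset.mem_toFinset] at hx
    simp [Multiset.count_eq_zero_of_notMem hx])]
  have h := Finset.sum_multiset_map_count P.parts id
  simp only [Multiset.map_id, id, smul_eq_mul] at h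
  rw [← h]
  simpa using P.parts_sum

/-- Euler's recurrence for the partition function:
`n · p(n) = ∑_{j=1}^{n} σ(j) · p(n − j)`, where `σ(j)` is the sum of the
positive divisors of `j`. -/
theorem stmt6 (n : ℕ) :
    n * Nat.card (Nat.Partition n) =
      ∑ j ∈ Finset.Icc 1 n,
        (∑ d ∈ Nat.divisors j, d) * Nat.card (Nat.Partition (n - j)) := by
  classical
  -- Step 1: rewrite each summand as a sum over the divisors antidiagonal
  have step1 : ∀ j ∈ Finset.Icc 1 n,
      (∑ d ∈ Nat.divisors j, d) * Nat.card (Nat.Partition (n - j))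
        = ∑ p ∈ Nat.divisorsAntidiagonal j,
            p.1 * Nat.card (Nat.Partition (n - p.1 * p.2)) := by
    intro j hj
    rw [Finset.sum_mul,
      Nat.sum_divisorsAntidiagonal (fun d e => d * Nat.card (Nat.Partition (n - d * e)))]
    refine Finset.sum_congr rfl fun d hd => ?_
    rw [Nat.mul_div_cancel' (Nat.mem_divisors.1 hd).1]
  rw [Finset.sum_congr rfl step1]
  -- Step 2: merge into a single sum over pairs
  set B : Finset (ℕ × ℕ) :=
    (Finset.Icc 1 n ×ˢ Finset.Icc 1 n).filter (fun p => p.1 * p.2 ≤ n) with hB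
  have hBU : B = (Finset.Icc 1 n).biUnion Nat.divisorsAntidiagonal := by
    ext p
    simp only [hB, Finset.mem_filter, Finset.mem_product, Finset.mem_Icc,
      Finset.mem_biUnion, Nat.mem_divisorsAntidiagonal]
    constructor
    · rintro ⟨⟨⟨h1, h2⟩, h3, h4⟩, h5⟩
      exact ⟨p.1 * p.2, ⟨Nat.one_le_iff_ne_zero.2 (by positivity), h5⟩, rfl, by positivity⟩
    · rintro ⟨j, ⟨hj1, hj2⟩, hpj, hj0⟩
      subst hpj
      have h1 : 0 < p.1 := by
        rcases Nat.eq_zero_or_pos p.1 with h | h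
        · rw [h, zero_mul] at hj1; omega
        · exact h
      have h2 : 0 < p.2 := by
        rcases Nat.eq_zero_or_pos p.2 with h | h
        · rw [h, mul_zero] at hj1; omega
        · exact h
      exact ⟨⟨⟨h1, le_trans (Nat.le_mul_of_pos_right _ h2) hj2⟩,
        h2, le_trans (Nat.le_mul_of_pos_left _ h1) hj2⟩, hj2⟩
  have hdisj : ((Finset.Icc 1 n : Finset ℕ) : Set ℕ).PairwiseDisjoint Nat.divisorsAntidiagonal := by
    intro j _ j' _ hne
    simp only [Function.onFun, Finset.disjoint_left]
    intro p hp hp'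
    exact hne ((Nat.mem_divisorsAntidiagonal.1 hp).1.symm.trans
      (Nat.mem_divisorsAntidiagonal.1 hp').1)
  rw [← Finset.sum_biUnion hdisj, ← hBU]
  -- Step 3: rewrite each term via the bijection
  have step3 : ∀ p ∈ B, p.1 * Nat.card (Nat.Partition (n - p.1 * p.2))
      = ∑ P : Nat.Partition n, if p.2 ≤ Multiset.count p.1 P.parts then p.1 else 0 := by
    intro p hp
    simp only [hB, Finset.mem_filter, Finset.mem_product, Finset.mem_Icc] at hp
    rw [card_part n p.1 p.2 hp.1.1.1 hp.2, ← Finset.sum_filter, Finset.sum_const,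
      smul_eq_mul, mul_comm]
  rw [Finset.sum_congr rfl step3, Finset.sum_comm]
  -- Step 4: for each partition the inner sum is n
  have step4 : ∀ P : Nat.Partition n,
      (∑ p ∈ B, if p.2 ≤ Multiset.count p.1 P.parts then p.1 else 0) = n := by
    intro P
    rw [← Finset.sum_filter]
    have hBA : B.filter (fun p : ℕ × ℕ => p.2 ≤ Multiset.count p.1 P.parts)
        = (Finset.Icc 1 n ×ˢ Finset.Icc 1 n).filter
            (fun p : ℕ × ℕ => p.2 ≤ Multiset.count p.1 P.parts) := by
      ext p
      simp only [hB, Finset.filter_filter, Finset.mem_filter, Finset.mem_product,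
        Finset.mem_Icc]
      constructor
      · rintro ⟨h1, h2, h3⟩; exact ⟨h1, h3⟩
      · rintro ⟨⟨⟨h1a, h1b⟩, h2a, h2b⟩, h3⟩
        refine ⟨⟨⟨h1a, h1b⟩, h2a, h2b⟩, ?_, h3⟩
        have hmem : p.1 ∈ P.parts := Multiset.count_pos.1 (lt_of_lt_of_le h2a h3)
        calc p.1 * p.2 ≤ p.1 * Multiset.count p.1 P.parts :=
              Nat.mul_le_mul_left _ h3
          _ = Multiset.count p.1 P.parts * p.1 := mul_comm _ _
          _ ≤ n := count_mul_le n P p.1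
    rw [hBA]
    exact sumA n P
  rw [Finset.sum_congr rfl (fun P _ => step4 P), Finset.sum_const, smul_eq_mul,
    Nat.card_eq_fintype_card, mul_comm]
  rfl
end

section
/- Corrected Harris–Subbarao recurrence (vector form): let k be a positive integer and f : Fin k → ℕ a nonzero tuple. Then in ℚ: p(f) · (∑_{i} f i) = ∑_{g} λ(g) · (∑_{i} g i) · p(f − g), where the sum is over all tuples g : Fin k → ℕ with g ≠ 0 and g j ≤ f j for all j, λ(g) = ∑_{d ∣ c(g)} 1/d, and c(g) is the greatest common divisor of the coordinates of g. -/
/-- The number of partitions of a vector `f : Fin k → ℕ`: the number of multisets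
of nonzero vectors whose sum is `f`. -/
noncomputable def numVectorPartitions (k : ℕ) (f : Fin k → ℕ) : ℕ :=
  Nat.card {t : Multiset (Fin k → ℕ) // (∀ v ∈ t, v ≠ 0) ∧ t.sum = f}

/-- `λ(g) = ∑_{d ∣ c(g)} 1/d` where `c(g)` is the gcd of the coordinates of `g`. -/
noncomputable def lamVec (k : ℕ) (g : Fin k → ℕ) : ℚ :=
  ∑ d ∈ (Finset.univ.gcd g).divisors, (1 : ℚ) / d


open Finset

variable {k : ℕ}

/-- coordinate sum -/
def sz (v : Fin k → ℕ) : ℕ := ∑ i, v i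

lemma sz_add (a b : Fin k → ℕ) : sz (a + b) = sz a + sz b := by
  simp [sz, Finset.sum_add_distrib]

lemma sz_sum (s : Multiset (Fin k → ℕ)) : sz s.sum = (s.map sz).sum := by
  induction s using Multiset.induction with
  | empty => simp [sz]
  | cons a s ih => rw [Multiset.sum_cons, Multiset.map_cons, Multiset.sum_cons, sz_add, ih]

lemma sz_pos {v : Fin k → ℕ} (hv : v ≠ 0) : 0 < sz v :=
  Nat.pos_of_ne_zero fun h =>
    hv (funext fun i => Finset.sum_eq_zero_iff.mp h i (Finset.mem_univ i))

lemma sz_smul (d : ℕ) (v : Fin k → ℕ) : sz (d • v) = d * sz v := by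
  simp only [sz, Finset.mul_sum]
  exact Finset.sum_congr rfl fun i _ => rfl

def VPSet (f : Fin k → ℕ) : Set (Multiset (Fin k → ℕ)) :=
  {t | (∀ v ∈ t, v ≠ 0) ∧ t.sum = f}

lemma mem_le_of_mem_VPSet {f : Fin k → ℕ} {t : Multiset (Fin k → ℕ)} (ht : t ∈ VPSet f)
    {v : Fin k → ℕ} (hv : v ∈ t) : v ≤ f := by
  rw [← ht.2]
  exact Multiset.single_le_sum (fun x _ => by positivity) v hv

lemma card_le_sz {f : Fin k → ℕ} {t : Multiset (Fin k → ℕ)} (ht : t ∈ VPSet f) :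
    Multiset.card t ≤ sz f := by
  have h1 : Multiset.card t = (t.map (fun _ => 1)).sum := by simp
  have h2 : (t.map (fun _ => (1:ℕ))).sum ≤ (t.map sz).sum :=
    Multiset.sum_map_le_sum_map _ _ (fun v hv => sz_pos (ht.1 v hv))
  rw [← ht.2, sz_sum]; omega

lemma VPSet_finite (f : Fin k → ℕ) : (VPSet f).Finite := by
  rw [← Set.finite_coe_iff]
  apply Finite.of_injective
    (fun t : VPSet f => fun b : Finset.Icc (0 : Fin k → ℕ) f =>
      (⟨(t : Multiset _).count b.val, by
        have := Multiset.count_le_card b.val (t : Multiset _)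
        have := card_le_sz t.2
        omega⟩ : Fin (sz f + 1)))
  rintro ⟨t, ht⟩ ⟨t', ht'⟩ h
  ext1
  ext a
  by_cases ha : a ∈ Finset.Icc (0 : Fin k → ℕ) f
  · have := congrFun h ⟨a, ha⟩
    simpa using this
  · have h1 : a ∉ t := fun hm => ha (by simp [mem_le_of_mem_VPSet ht hm])
    have h2 : a ∉ t' := fun hm => ha (by simp [mem_le_of_mem_VPSet ht' hm])
    simp [Multiset.count_eq_zero_of_notMem h1, Multiset.count_eq_zero_of_notMem h2]

noncomputable def PFin (f : Fin k → ℕ) : Finset (Multiset (Fin k → ℕ)) :=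
  (VPSet_finite f).toFinset

lemma mem_PFin {f : Fin k → ℕ} {t : Multiset (Fin k → ℕ)} :
    t ∈ PFin f ↔ (∀ v ∈ t, v ≠ 0) ∧ t.sum = f := by
  simp [PFin, VPSet]

lemma numVectorPartitions_eq (f : Fin k → ℕ) :
    numVectorPartitions k f = (PFin f).card := by
  rw [numVectorPartitions]
  rw [show {t : Multiset (Fin k → ℕ) // (∀ v ∈ t, v ≠ 0) ∧ t.sum = f} = ↥(VPSet f) from rfl]
  rw [Nat.card_coe_set_eq, Set.ncard_eq_toFinset_card _ (VPSet_finite f)]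
  rfl

lemma card_filter_count (f h : Fin k → ℕ) (hh : h ≠ 0) (d : ℕ) (hd : 0 < d) (hle : d • h ≤ f) :
    ((PFin f).filter (fun t => d ≤ t.count h)).card = (PFin (f - d • h)).card := by
  refine Finset.card_bij' (fun t _ => t - Multiset.replicate d h)
    (fun t' _ => t' + Multiset.replicate d h) ?_ ?_ ?_ ?_
  · rintro t ht
    rw [Finset.mem_filter, mem_PFin] at ht
    obtain ⟨⟨hnz, hsum⟩, hcount⟩ := ht
    have hr : Multiset.replicate d h ≤ t := Multiset.le_count_iff_replicate_le.mp hcount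
    rw [mem_PFin]
    constructor
    · exact fun v hv => hnz v (Multiset.mem_of_le (tsub_le_self) hv)
    · have hc : (t - Multiset.replicate d h) + Multiset.replicate d h = t :=
        tsub_add_cancel_of_le hr
      have := congrArg Multiset.sum hc
      rw [Multiset.sum_add, Multiset.sum_replicate, hsum] at this
      funext i
      have h1 := congrFun this i
      have h2 := hle i
      simp only [Pi.add_apply, Pi.sub_apply] at h1 ⊢
      omega
  · rintro t' ht'
    rw [mem_PFin] at ht'
    obtain ⟨hnz, hsum⟩ := ht'
    rw [Finset.mem_filter, mem_PFin]
    refine ⟨⟨fun v hv => ?_, ?_⟩, ?_⟩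
    · rcases Multiset.mem_add.mp hv with h1 | h1
      · exact hnz v h1
      · rw [Multiset.eq_of_mem_replicate h1]; exact hh
    · rw [Multiset.sum_add, Multiset.sum_replicate, hsum]
      funext i
      have h2 : (d • h) i ≤ f i := hle i
      simp only [Pi.add_apply, Pi.sub_apply, Pi.smul_apply, smul_eq_mul] at h2 ⊢
      omega
    · simp [Multiset.count_replicate]
  · intro t ht
    rw [Finset.mem_filter, mem_PFin] at ht
    exact tsub_add_cancel_of_le (Multiset.le_count_iff_replicate_le.mp ht.2)
  · intro t' _
    exact add_tsub_cancel_right _ _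

open scoped Classical in
lemma sum_count_eq (f h : Fin k → ℕ) (hh : h ≠ 0) :
    ∑ t ∈ PFin f, t.count h
      = ∑ d ∈ Finset.Icc 1 (sz f), if d • h ≤ f then (PFin (f - d • h)).card else 0 := by
  have step1 : ∀ t ∈ PFin f,
      t.count h = ∑ d ∈ Finset.Icc 1 (sz f), if d ≤ t.count h then 1 else 0 := by
    intro t ht
    have hc : t.count h ≤ sz f :=
      le_trans (Multiset.count_le_card h t) (card_le_sz (mem_PFin.mp ht))
    have hfe : (Finset.Icc 1 (sz f)).filter (fun d => d ≤ t.count h)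
        = Finset.Icc 1 (t.count h) := by
      ext d
      simp only [Finset.mem_filter, Finset.mem_Icc]
      omega
    calc Multiset.count h t = (Finset.Icc 1 (Multiset.count h t)).card := by
          rw [Nat.card_Icc]; omega
      _ = ((Finset.Icc 1 (sz f)).filter (fun d => d ≤ Multiset.count h t)).card := by rw [hfe]
      _ = _ := Finset.card_filter _ _
  rw [Finset.sum_congr rfl step1, Finset.sum_comm]
  refine Finset.sum_congr rfl fun d hd => ?_
  rw [Finset.mem_Icc] at hd
  rw [← Finset.card_filter]
  by_cases hdh : d • h ≤ f
  · rw [if_pos hdh]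
    exact card_filter_count f h hh d hd.1 hdh
  · rw [if_neg hdh, Finset.card_eq_zero, Finset.filter_eq_empty_iff]
    intro t ht
    rw [mem_PFin] at ht
    intro hcount
    apply hdh
    have hr : Multiset.replicate d h ≤ t := Multiset.le_count_iff_replicate_le.mp hcount
    have hc : (t - Multiset.replicate d h) + Multiset.replicate d h = t :=
      tsub_add_cancel_of_le hr
    have hs := congrArg Multiset.sum hc
    rw [Multiset.sum_add, Multiset.sum_replicate, ht.2] at hs
    intro i
    have h4 := congrFun hs i
    simp at h4 ⊢
    omega

open scoped Classical in
lemma nat_main (f : Fin k → ℕ) :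
    (PFin f).card * sz f
      = ∑ h ∈ (Finset.Icc 0 f).filter (· ≠ 0),
          sz h * ∑ d ∈ Finset.Icc 1 (sz f),
            if d • h ≤ f then (PFin (f - d • h)).card else 0 := by
  have hsz : ∀ t ∈ PFin f,
      sz f = ∑ h ∈ (Finset.Icc 0 f).filter (· ≠ 0), Multiset.count h t * sz h := by
    intro t ht
    rw [mem_PFin] at ht
    have h1 : sz f = ∑ h ∈ t.toFinset, Multiset.count h t * sz h := by
      rw [← ht.2, sz_sum, Finset.sum_multiset_map_count]
      simp [smul_eq_mul]
    rw [h1]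
    apply Finset.sum_subset
    · intro h hm
      rw [Multiset.mem_toFinset] at hm
      simp only [Finset.mem_filter, Finset.mem_Icc]
      refine ⟨⟨fun i => Nat.zero_le _, mem_le_of_mem_VPSet ⟨ht.1, ht.2⟩ hm⟩, ht.1 h hm⟩
    · intro h _ hm
      rw [Multiset.mem_toFinset] at hm
      simp [Multiset.count_eq_zero_of_notMem hm]
  calc (PFin f).card * sz f = ∑ t ∈ PFin f, sz f := by
        rw [Finset.sum_const, smul_eq_mul]
    _ = ∑ t ∈ PFin f, ∑ h ∈ (Finset.Icc 0 f).filter (· ≠ 0), Multiset.count h t * sz h :=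
        Finset.sum_congr rfl hsz
    _ = ∑ h ∈ (Finset.Icc 0 f).filter (· ≠ 0), ∑ t ∈ PFin f, Multiset.count h t * sz h :=
        Finset.sum_comm
    _ = _ := by
        refine Finset.sum_congr rfl fun h hm => ?_
        rw [Finset.mem_filter] at hm
        rw [← Finset.sum_mul, sum_count_eq f h hm.2, mul_comm]

lemma fi_le_sz (f : Fin k → ℕ) (i : Fin k) : f i ≤ sz f :=
  Finset.single_le_sum (fun _ _ => Nat.zero_le _) (Finset.mem_univ i)

open scoped Classical in
lemma key_bij (f : Fin k → ℕ) :
    (∑ g ∈ (Finset.Icc 0 f).filter (· ≠ 0), ∑ e ∈ (Finset.univ.gcd g).divisors,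
        ((1:ℚ)/e) * (sz g) * ((PFin (f-g)).card))
    = ∑ h ∈ (Finset.Icc 0 f).filter (· ≠ 0),
        ∑ d ∈ (Finset.Icc 1 (sz f)).filter (fun d => d • h ≤ f),
          ((sz h : ℚ)) * ((PFin (f - d • h)).card) := by
  rw [Finset.sum_sigma', Finset.sum_sigma']
  refine Finset.sum_bij' (fun p _ => (⟨fun i => p.1 i / p.2, p.2⟩ : Σ _ : Fin k → ℕ, ℕ))
    (fun q _ => (⟨q.2 • q.1, q.2⟩ : Σ _ : Fin k → ℕ, ℕ)) ?_ ?_ ?_ ?_ ?_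
  · rintro ⟨g, e⟩ ha
    simp only [Finset.mem_sigma, Finset.mem_filter, Finset.mem_Icc, Nat.mem_divisors] at ha ⊢
    obtain ⟨⟨⟨-, hgf⟩, hg0⟩, he, hc0⟩ := ha
    have hed : ∀ i, e ∣ g i := fun i => he.trans (Finset.gcd_dvd (Finset.mem_univ i))
    have he0 : 0 < e := Nat.pos_of_ne_zero fun h => hc0 (by simpa [h] using he)
    obtain ⟨i0, hi0⟩ : ∃ i, g i ≠ 0 := Function.ne_iff.mp hg0
    have hgi0 : 0 < g i0 := Nat.pos_of_ne_zero hi0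
    have hele : e ≤ g i0 := Nat.le_of_dvd hgi0 (hed i0)
    refine ⟨⟨⟨fun i => Nat.zero_le _, fun i => le_trans (Nat.div_le_self _ _) (hgf i)⟩, ?_⟩,
      ⟨he0, le_trans hele (le_trans (hgf i0) (fi_le_sz f i0))⟩, ?_⟩
    · exact Function.ne_iff.mpr ⟨i0, (Nat.div_pos hele he0).ne'⟩
    · intro i
      simpa [Nat.mul_div_cancel' (hed i)] using hgf i
  · rintro ⟨h, d⟩ ha
    simp only [Finset.mem_sigma, Finset.mem_filter, Finset.mem_Icc, Nat.mem_divisors] at ha ⊢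
    obtain ⟨⟨⟨-, hhf⟩, hh0⟩, ⟨hd1, -⟩, hdh⟩ := ha
    obtain ⟨i0, hi0⟩ : ∃ i, h i ≠ 0 := Function.ne_iff.mp hh0
    have hne : d • h ≠ 0 := Function.ne_iff.mpr ⟨i0, by
      simp only [Pi.smul_apply, smul_eq_mul, Pi.zero_apply]
      exact Nat.mul_ne_zero (by omega) hi0⟩
    refine ⟨⟨⟨fun i => Nat.zero_le _, hdh⟩, hne⟩, ?_, ?_⟩
    · refine Finset.dvd_gcd fun i _ => ?_
      simp only [Pi.smul_apply, smul_eq_mul]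
      exact dvd_mul_right d (h i)
    · simpa [Finset.gcd_eq_zero_iff, funext_iff] using hne
  · rintro ⟨g, e⟩ ha
    simp only [Finset.mem_sigma, Finset.mem_filter, Finset.mem_Icc, Nat.mem_divisors] at ha
    obtain ⟨⟨⟨-, hgf⟩, hg0⟩, he, hc0⟩ := ha
    have hed : ∀ i, e ∣ g i := fun i => he.trans (Finset.gcd_dvd (Finset.mem_univ i))
    have hfu : (e • fun i => g i / e) = g := funext fun i => by
      simp only [Pi.smul_apply, smul_eq_mul]
      exact Nat.mul_div_cancel' (hed i)
    simp [hfu]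
  · rintro ⟨h, d⟩ ha
    simp only [Finset.mem_sigma, Finset.mem_filter, Finset.mem_Icc, Nat.mem_divisors] at ha
    obtain ⟨-, ⟨hd1, -⟩, -⟩ := ha
    have hfu : (fun i => (d • h) i / d) = h := funext fun i => by
      simp only [Pi.smul_apply, smul_eq_mul]
      exact Nat.mul_div_cancel_left _ (by omega)
    exact Sigma.ext hfu (HEq.refl d)
  · rintro ⟨g, e⟩ ha
    simp only [Finset.mem_sigma, Finset.mem_filter, Finset.mem_Icc, Nat.mem_divisors] at ha
    obtain ⟨⟨⟨-, hgf⟩, hg0⟩, he, hc0⟩ := ha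
    have hed : ∀ i, e ∣ g i := fun i => he.trans (Finset.gcd_dvd (Finset.mem_univ i))
    have he0 : 0 < e := Nat.pos_of_ne_zero fun h => hc0 (by simpa [h] using he)
    have hfu : (e • fun i => g i / e) = g := funext fun i => by
      simp only [Pi.smul_apply, smul_eq_mul]
      exact Nat.mul_div_cancel' (hed i)
    have hsz : sz g = e * sz (fun i => g i / e) := by
      simp only [sz, Finset.mul_sum]
      exact Finset.sum_congr rfl fun i _ => (Nat.mul_div_cancel' (hed i)).symm
    have heQ : (e : ℚ) ≠ 0 := Nat.cast_ne_zero.mpr (by omega)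
    rw [show f - e • (fun i => g i / e) = f - g from by rw [hfu], hsz]
    push_cast
    field_simp

/-- Corrected Harris–Subbarao recurrence (vector form): for a
nonzero `f : Fin k → ℕ`,
`p(f) · (∑ i, f i) = ∑_{0 ≠ g ≤ f} λ(g) · (∑ i, g i) · p(f − g)` in `ℚ`. -/
theorem stmt8 (k : ℕ) (hk : 0 < k) (f : Fin k → ℕ) (hf : f ≠ 0) :
    (numVectorPartitions k f : ℚ) * (∑ i, (f i : ℚ)) =
      ∑ g ∈ (Finset.Icc 0 f).filter (· ≠ 0),
        lamVec k g * (∑ i, (g i : ℚ)) * numVectorPartitions k (f - g) := by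
  have hcast : ∀ v : Fin k → ℕ, (∑ i, (v i : ℚ)) = ((sz v : ℕ) : ℚ) := fun v => by
    simp [sz]
  have hRHS : (∑ g ∈ (Finset.Icc 0 f).filter (· ≠ 0),
        lamVec k g * (∑ i, (g i : ℚ)) * (numVectorPartitions k (f - g) : ℚ))
      = ∑ g ∈ (Finset.Icc 0 f).filter (· ≠ 0), ∑ e ∈ (Finset.univ.gcd g).divisors,
          ((1:ℚ)/e) * (sz g) * ((PFin (f-g)).card) := by
    refine Finset.sum_congr rfl fun g _ => ?_
    rw [lamVec, hcast, numVectorPartitions_eq, Finset.sum_mul, Finset.sum_mul]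
  rw [hRHS, key_bij, hcast, numVectorPartitions_eq]
  rw [show ((PFin f).card : ℚ) * ((sz f : ℕ):ℚ) = (((PFin f).card * sz f : ℕ) : ℚ) by
    push_cast; ring]
  rw [nat_main f]
  push_cast
  refine Finset.sum_congr rfl fun h hm => ?_
  rw [Finset.sum_filter, Finset.mul_sum]
  refine Finset.sum_congr rfl fun d hd => ?_
  split_ifs <;> simp
end

section
/- Corrected Harris–Subbarao recurrence (arithmetic form): for every natural number n ≥ 2, the following identity holds in ℚ: p*(n) · Ω(n) = ∑_{d ∣ n, d ≠ 1} λ(d) · Ω(d) · p*(n / d), where Ω(m) is the number of prime factors of m counted with multiplicity, c(d) is the greatest common divisor of the exponents appearing in the prime factorization of d, and λ(d) = ∑_{i ∣ c(d)} 1/i. -/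
/-- `c(d)`: the gcd of the exponents in the prime factorization of `d`. -/
def expGcd (d : ℕ) : ℕ :=
  d.primeFactors.gcd fun p => d.factorization p

/-- `λ(d) = ∑_{i ∣ c(d)} 1/i`. -/
noncomputable def lam (d : ℕ) : ℚ :=
  ∑ i ∈ (expGcd d).divisors, (1 : ℚ) / i

/-! ### Auxiliary definitions and lemmas -/

/-- `Ω`, the number of prime factors with multiplicity. -/
def Om (m : ℕ) : ℕ := m.primeFactorsList.length

lemma Om_mul {a b : ℕ} (ha : a ≠ 0) (hb : b ≠ 0) : Om (a * b) = Om a + Om b := by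
  have := (Nat.perm_primeFactorsList_mul ha hb).length_eq
  simpa [Om] using this

lemma Om_pow {b : ℕ} (hb : b ≠ 0) (i : ℕ) : Om (b ^ i) = i * Om b := by
  induction i with
  | zero => simp [Om]
  | succ k ih =>
    rw [pow_succ, Om_mul (pow_ne_zero _ hb) hb, ih]; ring

lemma Om_pos {x : ℕ} (hx : 2 ≤ x) : 1 ≤ Om x := by
  by_contra h
  have h0 : Om x = 0 := by omega
  have hx0 : x ≠ 0 := by omega
  have : x.primeFactorsList = [] := List.length_eq_zero_iff.mp h0
  have := Nat.prod_primeFactorsList hx0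
  rw [this] at *
  simp_all

lemma Om_prod (s : Multiset ℕ) (hs : ∀ x ∈ s, x ≠ 0) :
    Om s.prod = (s.map Om).sum := by
  induction s using Multiset.induction with
  | empty => simp [Om]
  | cons a s ih =>
    have ha : a ≠ 0 := hs a (Multiset.mem_cons_self a s)
    have hs' : ∀ x ∈ s, x ≠ 0 := fun x hx => hs x (Multiset.mem_cons_of_mem hx)
    have hsp : s.prod ≠ 0 := Multiset.prod_ne_zero (fun h0 => hs' 0 h0 rfl)
    rw [Multiset.prod_cons, Om_mul ha hsp, ih hs', Multiset.map_cons, Multiset.sum_cons]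

lemma Om_dvd_le {m n : ℕ} (h : m ∣ n) (hn : n ≠ 0) : Om m ≤ Om n := by
  obtain ⟨k, rfl⟩ := h
  have hm : m ≠ 0 := by rintro rfl; simp at hn
  have hk : k ≠ 0 := by rintro rfl; simp at hn
  rw [Om_mul hm hk]; omega

/-- ambient finset of multisets containing all factorizations of divisors of `n`. -/
def amb (n : ℕ) : Finset (Multiset ℕ) :=
  ((Om n • Multiset.range (n + 1)).powerset).toFinset

/-- factorizations of `m`, as a finset (for `m ∣ n`). -/
def Fct (n m : ℕ) : Finset (Multiset ℕ) :=
  (amb n).filter (fun s => (∀ x ∈ s, 2 ≤ x) ∧ s.prod = m)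

lemma count_le_Om {n m : ℕ} (hmn : m ∣ n) (hn : n ≠ 0) {s : Multiset ℕ}
    (h2 : ∀ x ∈ s, 2 ≤ x) (hp : s.prod = m) (a : ℕ) : s.count a ≤ Om n := by
  by_cases ha : a ∈ s
  · have key : Om m = (s.map Om).sum := hp ▸ Om_prod s (fun x hx => by have := h2 x hx; omega)
    rw [Finset.sum_multiset_map_count] at key
    have h1 : s.count a • Om a ≤ ∑ b ∈ s.toFinset, s.count b • Om b :=
      Finset.single_le_sum (f := fun b => s.count b • Om b) (fun i _ => Nat.zero_le _)
        (Multiset.mem_toFinset.mpr ha)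
    have h2a : 1 ≤ Om a := Om_pos (h2 a ha)
    have hOmm : Om m ≤ Om n := Om_dvd_le hmn hn
    have hle : s.count a * Om a ≤ Om n := by
      rw [← smul_eq_mul]; omega
    nlinarith
  · simp [Multiset.count_eq_zero_of_notMem ha]

lemma mem_Fct {n m : ℕ} (hmn : m ∣ n) (hn : 2 ≤ n) {s : Multiset ℕ} :
    s ∈ Fct n m ↔ (∀ x ∈ s, 2 ≤ x) ∧ s.prod = m := by
  constructor
  · intro h; exact (Finset.mem_filter.mp h).2
  · rintro ⟨h2, hp⟩
    refine Finset.mem_filter.mpr ⟨?_, h2, hp⟩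
    rw [amb, Multiset.mem_toFinset, Multiset.mem_powerset, Multiset.le_iff_count]
    intro a
    by_cases ha : a ∈ s
    · have haa : a ∈ Multiset.range (n + 1) := by
        rw [Multiset.mem_range]
        have hd : a ∣ m := hp ▸ Multiset.dvd_prod ha
        have : a ≤ n := Nat.le_of_dvd (by omega) (hd.trans hmn)
        omega
      rw [Multiset.count_nsmul, Multiset.count_eq_one_of_mem (Multiset.nodup_range _) haa,
        mul_one]
      exact count_le_Om hmn (by omega) h2 hp a
    · simp [Multiset.count_eq_zero_of_notMem ha]

lemma numFact_eq {n m : ℕ} (hmn : m ∣ n) (hn : 2 ≤ n) :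
    numFactorizations m = (Fct n m).card := by
  have hset : {s : Multiset ℕ | (∀ x ∈ s, 2 ≤ x) ∧ s.prod = m} = ↑(Fct n m) := by
    ext s
    simp only [Set.mem_setOf_eq, Finset.coe_filter, Finset.mem_coe]
    exact (mem_Fct hmn hn).symm
  calc numFactorizations m
      = Nat.card {s : Multiset ℕ | (∀ x ∈ s, 2 ≤ x) ∧ s.prod = m} := rfl
    _ = ({s : Multiset ℕ | (∀ x ∈ s, 2 ≤ x) ∧ s.prod = m}).ncard :=
        Nat.card_coe_set_eq _
    _ = (Fct n m).card := by rw [hset, Set.ncard_coe_finset]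

lemma expGcd_ne_zero {d : ℕ} (hd : 2 ≤ d) : expGcd d ≠ 0 := by
  intro h
  obtain ⟨p, hp, hpd⟩ := Nat.exists_prime_and_dvd (show d ≠ 1 by omega)
  have hmem : p ∈ d.primeFactors := Nat.mem_primeFactors.mpr ⟨hp, hpd, by omega⟩
  have := Finset.gcd_eq_zero_iff.mp h p hmem
  have := hp.factorization_pos_of_dvd (show d ≠ 0 by omega) hpd
  omega

lemma dvd_expGcd_of_pow {b i d : ℕ} (h : b ^ i = d) : i ∣ expGcd d := by
  refine Finset.dvd_gcd fun p _ => ?_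
  rw [← h, Nat.factorization_pow]
  exact Dvd.intro _ rfl

/-- the `i`-th root of `d`. -/
def nroot (d i : ℕ) : ℕ := d.factorization.prod fun p e => p ^ (e / i)

lemma nroot_pow {d i : ℕ} (hd : 2 ≤ d) (hi : i ∣ expGcd d) (hi0 : i ≠ 0) :
    (nroot d i) ^ i = d := by
  have hd0 : d ≠ 0 := by omega
  rw [nroot, Finsupp.prod, ← Finset.prod_pow]
  have : ∀ p ∈ d.factorization.support,
      (p ^ (d.factorization p / i)) ^ i = p ^ d.factorization p := by
    intro p hp
    rw [← pow_mul]
    congr 1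
    have hp' : p ∈ d.primeFactors := by rwa [Nat.support_factorization] at hp
    have hdvd : i ∣ d.factorization p := hi.trans (Finset.gcd_dvd hp')
    exact Nat.div_mul_cancel hdvd
  rw [Finset.prod_congr rfl this]
  exact Nat.factorization_prod_pow_eq_self hd0

lemma two_le_of_pow {b i d : ℕ} (h : b ^ i = d) (hd : 2 ≤ d) (hi : i ≠ 0) : 2 ≤ b := by
  by_contra hb
  have : b ≤ 1 := by omega
  have : b ^ i ≤ 1 ^ i := Nat.pow_le_pow_left this i
  simp at this; omega

set_option maxHeartbeats 2000000 in
/-- Corrected Harris–Subbarao recurrence (arithmetic form): for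
`n ≥ 2`, `p*(n) · Ω(n) = ∑_{d ∣ n, d ≠ 1} λ(d) · Ω(d) · p*(n / d)` in `ℚ`,
where `Ω` counts prime factors with multiplicity. -/
theorem stmt9 (n : ℕ) (hn : 2 ≤ n) :
    (numFactorizations n : ℚ) * (n.primeFactorsList.length : ℚ) =
      ∑ d ∈ n.divisors.erase 1,
        lam d * (d.primeFactorsList.length : ℚ) * numFactorizations (n / d) := by
  classical
  have hn0 : n ≠ 0 := by omega
  -- Step 1: rewrite the LHS as a triple sum over (s, b, i).
  have hLHS : (numFactorizations n : ℚ) * (n.primeFactorsList.length : ℚ)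
      = ∑ s ∈ Fct n n, ∑ b ∈ s.toFinset,
          ∑ _i ∈ Finset.Icc 1 (s.count b), (Om b : ℚ) := by
    rw [numFact_eq dvd_rfl hn]
    have h1 : ((Fct n n).card : ℚ) * (n.primeFactorsList.length : ℚ)
        = ∑ _s ∈ Fct n n, (Om n : ℚ) := by
      rw [Finset.sum_const, nsmul_eq_mul]; rfl
    rw [h1]
    refine Finset.sum_congr rfl fun s hs => ?_
    obtain ⟨h2, hp⟩ := (mem_Fct dvd_rfl hn).mp hs
    have hOm : Om n = (s.map Om).sum := by
      rw [← hp]; exact Om_prod s (fun x hx => by have := h2 x hx; omega)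
    rw [Finset.sum_multiset_map_count] at hOm
    rw [hOm]
    push_cast
    refine Finset.sum_congr rfl fun b hb => ?_
    rw [Finset.sum_const, Nat.card_Icc]
    simp [nsmul_eq_mul, mul_comm]
  -- Step 2: rewrite the RHS as a double sum over d and pairs (i, t).
  have hRHS : (∑ d ∈ n.divisors.erase 1,
        lam d * (d.primeFactorsList.length : ℚ) * numFactorizations (n / d))
      = ∑ d ∈ n.divisors.erase 1,
          ∑ p ∈ (expGcd d).divisors ×ˢ Fct n (n / d), (Om d : ℚ) / p.1 := by
    refine Finset.sum_congr rfl fun d hd => ?_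
    obtain ⟨hd1, hddvd⟩ := Finset.mem_erase.mp hd
    have hdvd : d ∣ n := (Nat.mem_divisors.mp hddvd).1
    rw [numFact_eq (Nat.div_dvd_of_dvd hdvd) hn, lam, Finset.sum_product,
      Finset.sum_mul, Finset.sum_mul]
    refine Finset.sum_congr rfl fun i hi => ?_
    show 1 / (i : ℚ) * (Om d : ℚ) * ((Fct n (n / d)).card : ℚ)
      = ∑ _y ∈ Fct n (n / d), (Om d : ℚ) / i
    rw [Finset.sum_const, nsmul_eq_mul]
    ring
  rw [hLHS, hRHS]
  -- Step 3: flatten both sides into sums over sigma types.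
  have hL : (∑ s ∈ Fct n n, ∑ b ∈ s.toFinset,
        ∑ _i ∈ Finset.Icc 1 (s.count b), (Om b : ℚ))
      = ∑ x ∈ (Fct n n).sigma (fun s => s.toFinset.sigma
          fun b => Finset.Icc 1 (s.count b)), (Om x.2.1 : ℚ) := by
    calc (∑ s ∈ Fct n n, ∑ b ∈ s.toFinset,
          ∑ _i ∈ Finset.Icc 1 (s.count b), (Om b : ℚ))
        = ∑ s ∈ Fct n n, ∑ q ∈ (s.toFinset.sigma
            fun b => Finset.Icc 1 (s.count b)), (Om q.1 : ℚ) :=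
          Finset.sum_congr rfl fun s _ =>
            Finset.sum_sigma' s.toFinset _ (fun b _ => (Om b : ℚ))
      _ = _ := Finset.sum_sigma' (Fct n n)
          (fun s => s.toFinset.sigma fun b => Finset.Icc 1 (s.count b))
          (fun _ q => (Om q.1 : ℚ))
  have hR : (∑ d ∈ n.divisors.erase 1,
        ∑ p ∈ (expGcd d).divisors ×ˢ Fct n (n / d), (Om d : ℚ) / p.1)
      = ∑ y ∈ (n.divisors.erase 1).sigma
          (fun d => (expGcd d).divisors ×ˢ Fct n (n / d)), (Om y.1 : ℚ) / y.2.1 :=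
    Finset.sum_sigma' (n.divisors.erase 1)
      (fun d => (expGcd d).divisors ×ˢ Fct n (n / d))
      (fun d p => (Om d : ℚ) / p.1)
  rw [hL, hR]
  -- Step 4: the bijection.
  refine Finset.sum_nbij'
    (i := fun x => ⟨x.2.1 ^ x.2.2, (x.2.2, x.1 - Multiset.replicate x.2.2 x.2.1)⟩)
    (j := fun y => ⟨y.2.2 + Multiset.replicate y.2.1 (nroot y.1 y.2.1),
      nroot y.1 y.2.1, y.2.1⟩) ?_ ?_ ?_ ?_ ?_
  · -- forward membership
    rintro ⟨s, b, k⟩ hx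
    simp only [Finset.mem_sigma] at hx ⊢
    obtain ⟨hs, hb, hk⟩ := hx
    obtain ⟨h2, hp⟩ := (mem_Fct dvd_rfl hn).mp hs
    rw [Multiset.mem_toFinset] at hb
    rw [Finset.mem_Icc] at hk
    have hb2 : 2 ≤ b := h2 b hb
    have hrep : Multiset.replicate k b ≤ s := Multiset.le_count_iff_replicate_le.mp hk.2
    have hst : s - Multiset.replicate k b + Multiset.replicate k b = s :=
      tsub_add_cancel_of_le hrep
    have hprod : (s - Multiset.replicate k b).prod * b ^ k = n := by
      rw [← hp]
      conv_rhs => rw [← hst]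
      rw [Multiset.prod_add, Multiset.prod_replicate]
    have hd2 : 2 ≤ b ^ k := by
      calc 2 ≤ b := hb2
      _ = b ^ 1 := (pow_one b).symm
      _ ≤ b ^ k := Nat.pow_le_pow_right (by omega) hk.1
    have hddvd : b ^ k ∣ n := ⟨(s - Multiset.replicate k b).prod, by
      rw [← hprod, mul_comm]⟩
    refine ⟨Finset.mem_erase.mpr ⟨by omega, Nat.mem_divisors.mpr ⟨hddvd, hn0⟩⟩, ?_⟩
    refine Finset.mem_product.mpr ⟨Nat.mem_divisors.mpr
      ⟨dvd_expGcd_of_pow rfl, expGcd_ne_zero hd2⟩, ?_⟩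
    refine (mem_Fct (Nat.div_dvd_of_dvd hddvd) hn).mpr ⟨?_, ?_⟩
    · intro x hx
      exact h2 x (Multiset.mem_of_le (Multiset.sub_le_self _ _) hx)
    · rw [← hprod, Nat.mul_div_cancel _ (by omega : 0 < b ^ k)]
  · -- backward membership
    rintro ⟨d, k, t⟩ hy
    simp only [Finset.mem_sigma, Finset.mem_product] at hy ⊢
    obtain ⟨hd, hk, ht⟩ := hy
    obtain ⟨hd1, hddvd⟩ := Finset.mem_erase.mp hd
    have hdvd : d ∣ n := (Nat.mem_divisors.mp hddvd).1
    have hd0 : d ≠ 0 := by rintro rfl; exact hn0 (Nat.eq_zero_of_zero_dvd hdvd)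
    have hd2 : 2 ≤ d := by omega
    obtain ⟨hkd, he0⟩ := Nat.mem_divisors.mp hk
    have hk0 : k ≠ 0 := by rintro rfl; exact he0 (zero_dvd_iff.mp hkd)
    have hbk : (nroot d k) ^ k = d := nroot_pow hd2 hkd hk0
    have hb2 : 2 ≤ nroot d k := two_le_of_pow hbk hd2 hk0
    obtain ⟨h2t, hpt⟩ := (mem_Fct (Nat.div_dvd_of_dvd hdvd) hn).mp ht
    have hsmem : t + Multiset.replicate k (nroot d k) ∈ Fct n n := by
      refine (mem_Fct dvd_rfl hn).mpr ⟨?_, ?_⟩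
      · intro x hx
        rcases Multiset.mem_add.mp hx with h | h
        · exact h2t x h
        · rw [Multiset.eq_of_mem_replicate h]; exact hb2
      · rw [Multiset.prod_add, Multiset.prod_replicate, hpt, hbk,
          Nat.div_mul_cancel hdvd]
    refine ⟨hsmem, ?_, ?_⟩
    · rw [Multiset.mem_toFinset, Multiset.mem_add]
      exact Or.inr (Multiset.mem_replicate.mpr ⟨hk0, rfl⟩)
    · rw [Finset.mem_Icc, Multiset.count_add, Multiset.count_replicate_self]
      omega
  · -- left inverse
    rintro ⟨s, b, k⟩ hx
    simp only [Finset.mem_sigma] at hx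
    obtain ⟨hs, hb, hk⟩ := hx
    obtain ⟨h2, hp⟩ := (mem_Fct dvd_rfl hn).mp hs
    rw [Multiset.mem_toFinset] at hb
    rw [Finset.mem_Icc] at hk
    have hb2 : 2 ≤ b := h2 b hb
    have hk0 : k ≠ 0 := by omega
    have hd2 : 2 ≤ b ^ k := by
      calc 2 ≤ b := hb2
      _ = b ^ 1 := (pow_one b).symm
      _ ≤ b ^ k := Nat.pow_le_pow_right (by omega) hk.1
    have hroot : nroot (b ^ k) k = b := by
      have h1 : (nroot (b ^ k) k) ^ k = b ^ k :=
        nroot_pow hd2 (dvd_expGcd_of_pow rfl) hk0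
      exact Nat.pow_left_injective hk0 h1
    have hrep : Multiset.replicate k b ≤ s := Multiset.le_count_iff_replicate_le.mp hk.2
    have hst : s - Multiset.replicate k b + Multiset.replicate k b = s :=
      tsub_add_cancel_of_le hrep
    simp only [hroot, hst]
  · -- right inverse
    rintro ⟨d, k, t⟩ hy
    simp only [Finset.mem_sigma, Finset.mem_product] at hy
    obtain ⟨hd, hk, ht⟩ := hy
    obtain ⟨hd1, hddvd⟩ := Finset.mem_erase.mp hd
    have hdvd : d ∣ n := (Nat.mem_divisors.mp hddvd).1
    have hd0 : d ≠ 0 := by rintro rfl; exact hn0 (Nat.eq_zero_of_zero_dvd hdvd)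
    have hd2 : 2 ≤ d := by omega
    obtain ⟨hkd, he0⟩ := Nat.mem_divisors.mp hk
    have hk0 : k ≠ 0 := by rintro rfl; exact he0 (zero_dvd_iff.mp hkd)
    have hbk : (nroot d k) ^ k = d := nroot_pow hd2 hkd hk0
    simp only [hbk, add_tsub_cancel_right]
  · -- values agree
    rintro ⟨s, b, k⟩ hx
    simp only [Finset.mem_sigma] at hx
    obtain ⟨hs, hb, hk⟩ := hx
    obtain ⟨h2, hp⟩ := (mem_Fct dvd_rfl hn).mp hs
    rw [Multiset.mem_toFinset] at hb
    rw [Finset.mem_Icc] at hk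
    have hb2 : 2 ≤ b := h2 b hb
    show (Om b : ℚ) = (Om (b ^ k) : ℚ) / k
    rw [Om_pow (by omega : b ≠ 0)]
    have hk0 : (k : ℚ) ≠ 0 := by
      have : 1 ≤ k := hk.1
      exact_mod_cast by omega
    push_cast
    field_simp
end

section
/- Let n be a positive natural number and p a prime number with p ∤ n. Then the number of unordered factorizations of n·p satisfies p*(n·p) = ∑_{d ∣ n} p*(d), the sum being over all positive divisors d of n. -/
lemma facFinite (m : ℕ) :
    Finite {s : Multiset ℕ // (∀ x ∈ s, 2 ≤ x) ∧ s.prod = m} := by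
  have hsub : {s : Multiset ℕ | (∀ x ∈ s, 2 ≤ x) ∧ s.prod = m} ⊆
      ↑((m • Multiset.range (m + 1)).powerset.toFinset) := by
    intro s hs
    obtain ⟨h2, hprod⟩ := hs
    simp only [Finset.coe_sort_coe, Finset.mem_coe, Multiset.mem_toFinset,
      Multiset.mem_powerset]
    have hcard : s.card ≤ m := by
      have h1 : 2 ^ s.card ≤ s.prod := Multiset.pow_card_le_prod h2
      have h2' : s.card < 2 ^ s.card := Nat.lt_two_pow_self
      omega
    rw [Multiset.le_iff_count]
    intro x
    by_cases hx : x ∈ s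
    · have hxm : x ∣ m := hprod ▸ Multiset.dvd_prod hx
      have hm0 : m ≠ 0 := by
        intro h
        subst h
        have := Multiset.prod_eq_zero_iff.mp hprod
        have := h2 0 this
        omega
      have hxle : x < m + 1 := by
        have := Nat.le_of_dvd (Nat.pos_of_ne_zero hm0) hxm
        omega
      have : Multiset.count x (m • Multiset.range (m + 1)) = m := by
        rw [Multiset.count_nsmul, Multiset.count_eq_one_of_mem
          (Multiset.nodup_range _) (Multiset.mem_range.mpr hxle), mul_one]
      rw [this]
      exact le_trans (Multiset.count_le_card x s) hcard
    · simp [Multiset.count_eq_zero_of_notMem hx]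
  exact ((Finset.finite_toSet _).subset hsub).to_subtype

/-- If `p` is a prime not dividing a positive natural number `n`,
then `p*(n · p) = ∑_{d ∣ n} p*(d)`. -/
theorem stmt12 (n : ℕ) (hn : 0 < n) (p : ℕ) (hp : p.Prime) (hpn : ¬ p ∣ n) :
    numFactorizations (n * p) = ∑ d ∈ n.divisors, numFactorizations d := by
  haveI : ∀ m : ℕ, Finite {s : Multiset ℕ // (∀ x ∈ s, 2 ≤ x) ∧ s.prod = m} := facFinite
  haveI : ∀ m : ℕ, Fintype {s : Multiset ℕ // (∀ x ∈ s, 2 ≤ x) ∧ s.prod = m} :=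
    fun m => Fintype.ofFinite _
  -- the pieces: for each divisor d of n, factorizations of d
  set Fac : ℕ → Type := fun m => {s : Multiset ℕ // (∀ x ∈ s, 2 ≤ x) ∧ s.prod = m} with hFac
  -- build g
  have key : ∀ (d : ℕ), d ∈ n.divisors → 2 ≤ p * (n / d) := by
    intro d hd
    rw [Nat.mem_divisors] at hd
    have hd0 : 0 < d := Nat.pos_of_dvd_of_pos hd.1 hn
    have : 0 < n / d := Nat.div_pos (Nat.le_of_dvd hn hd.1) hd0
    calc 2 ≤ p := hp.two_le
    _ = p * 1 := (mul_one p).symm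
    _ ≤ p * (n / d) := Nat.mul_le_mul_left p this
  let g : (Σ d : n.divisors, Fac d) → Fac (n * p) := fun x =>
    ⟨(p * (n / x.1.1)) ::ₘ x.2.1, by
      obtain ⟨⟨d, hd⟩, ⟨t, ht2, htp⟩⟩ := x
      constructor
      · intro y hy
        rcases Multiset.mem_cons.mp hy with h | h
        · exact h ▸ key d hd
        · exact ht2 y h
      · rw [Nat.mem_divisors] at hd
        have htp' : t.prod = d := htp
        show ((p * (n / d)) ::ₘ t).prod = n * p
        rw [Multiset.prod_cons, htp', mul_assoc, Nat.div_mul_cancel hd.1, mul_comm]⟩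
  -- elements of a factorization of a divisor of n are not divisible by p
  have hnotdvd : ∀ (d : ℕ), d ∈ n.divisors → ∀ (t : Multiset ℕ), t.prod = d →
      ∀ x ∈ t, ¬ p ∣ x := by
    intro d hd t htp x hx hdvd
    rw [Nat.mem_divisors] at hd
    exact hpn (dvd_trans (dvd_trans hdvd (htp ▸ Multiset.dvd_prod hx)) hd.1)
  have hbij : Function.Bijective g := by
    constructor
    · rintro ⟨⟨d1, hd1⟩, ⟨t1, ht12, ht1p⟩⟩ ⟨⟨d2, hd2⟩, ⟨t2, ht22, ht2p⟩⟩ hab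
      have hs : (p * (n / d1)) ::ₘ t1 = (p * (n / d2)) ::ₘ t2 :=
        congrArg Subtype.val hab
      have ha : (p * (n / d1)) = (p * (n / d2)) := by
        have hmem : (p * (n / d1)) ∈ (p * (n / d2)) ::ₘ t2 := by
          rw [← hs]; exact Multiset.mem_cons_self _ _
        rcases Multiset.mem_cons.mp hmem with h | h
        · exact h
        · exact absurd (Dvd.intro _ rfl) (hnotdvd d2 hd2 t2 ht2p _ h)
      rw [ha] at hs
      have ht : t1 = t2 := (Multiset.cons_inj_right _).mp hs
      have hd : d1 = d2 := by
        have a : t1.prod = d1 := ht1p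
        have b : t2.prod = d2 := ht2p
        rw [← a, ← b, ht]
      subst hd
      subst ht
      rfl
    · rintro ⟨s, hs2, hsp⟩
      have hpdvd : p ∣ s.prod := hsp ▸ Dvd.intro_left n rfl
      obtain ⟨x, hxs, hpx⟩ := hp.prime.exists_mem_multiset_dvd hpdvd
      set t := s.erase x with htdef
      have hst : s = x ::ₘ t := (Multiset.cons_erase hxs).symm
      obtain ⟨e, hxe⟩ := hpx
      set d := t.prod with hddef
      have hprod : x * t.prod = n * p := by
        rw [← Multiset.prod_cons, ← hst, hsp]
      have hed : e * d = n := by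
        have : p * (e * d) = p * n := by
          rw [← mul_assoc, ← hxe, hprod, mul_comm]
        exact Nat.eq_of_mul_eq_mul_left hp.pos this
      have hdvd : d ∣ n := ⟨e, by rw [mul_comm, hed]⟩
      have hdmem : d ∈ n.divisors := Nat.mem_divisors.mpr ⟨hdvd, hn.ne'⟩
      have hd0 : 0 < d := Nat.pos_of_dvd_of_pos hdvd hn
      have hnd : n / d = e := Nat.div_eq_of_eq_mul_left hd0 hed.symm
      have ht2 : ∀ y ∈ t, 2 ≤ y := fun y hy => hs2 y (Multiset.mem_of_mem_erase hy)
      refine ⟨⟨⟨d, hdmem⟩, ⟨t, ht2, rfl⟩⟩, ?_⟩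
      apply Subtype.ext
      show (p * (n / d)) ::ₘ t = s
      rw [hnd, ← hxe, ← hst]
  have hcard : Nat.card (Fac (n * p)) = Nat.card (Σ d : n.divisors, Fac d) :=
    Nat.card_congr (Equiv.ofBijective g hbij).symm
  rw [show numFactorizations (n * p) = Nat.card (Fac (n * p)) from rfl, hcard]
  rw [Nat.card_eq_fintype_card, Fintype.card_sigma]
  rw [← Finset.sum_coe_sort n.divisors (fun d => numFactorizations d)]
  apply Finset.sum_congr rfl
  intro d _
  rw [show numFactorizations d = Nat.card (Fac d) from rfl, Nat.card_eq_fintype_card]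
end

section
/- Let p and q be distinct prime numbers and n a natural number. Then p*(p · q^n) = ∑_{i=0}^{n} p(i), where p(i) is the number of partitions of i (with p(0) = 1). -/
lemma prod_map_pow'' (q : ℕ) (c : Multiset ℕ) : (c.map (q ^ ·)).prod = q ^ c.sum := by
  induction c using Multiset.induction with
  | empty => simp
  | cons a s ih => simp [ih, pow_add]

lemma eq_pow_factorization'' {q z m : ℕ} (hq : q.Prime) (hz : z ∣ q ^ m) :
    q ^ (z.factorization q) = z := by
  obtain ⟨e, -, rfl⟩ := (Nat.dvd_prime_pow hq).mp hz
  simp [hq.factorization_pow]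

/-- For distinct primes `p, q` and any `n`,
`p*(p · q^n) = ∑_{i=0}^{n} p(i)`, where `p(i)` is the partition function. -/
theorem stmt13 (p q : ℕ) (hp : p.Prime) (hq : q.Prime) (hpq : p ≠ q) (n : ℕ) :
    numFactorizations (p * q ^ n) =
      ∑ i ∈ Finset.range (n + 1), Nat.card (Nat.Partition i) := by
  classical
  have hq2 := hq.two_le
  have hinj := Nat.pow_right_injective hq2
  set F : (Σ k : Fin (n+1), Nat.Partition k.val) →
      {s : Multiset ℕ // (∀ x ∈ s, 2 ≤ x) ∧ s.prod = p * q ^ n} := fun x =>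
    ⟨(p * q ^ (n - x.1.val)) ::ₘ x.2.parts.map (q ^ ·), by
        intro y hy
        rcases Multiset.mem_cons.mp hy with rfl | hy
        · calc 2 ≤ p := hp.two_le
            _ ≤ p * q ^ (n - x.1.val) := Nat.le_mul_of_pos_right _ (by positivity)
        · obtain ⟨i, hi, rfl⟩ := Multiset.mem_map.mp hy
          calc 2 ≤ q := hq2
            _ = q ^ 1 := (pow_one q).symm
            _ ≤ q ^ i := Nat.pow_le_pow_right hq.pos (x.2.parts_pos hi)
      , by
        have hk : x.1.val ≤ n := Nat.lt_succ_iff.mp x.1.isLt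
        rw [Multiset.prod_cons, prod_map_pow'', x.2.parts_sum, mul_assoc, ← pow_add,
          Nat.sub_add_cancel hk]⟩ with hF
  have hFbij : Function.Bijective F := by
    constructor
    · rintro ⟨k₁, π₁⟩ ⟨k₂, π₂⟩ h
      have hm : (p * q ^ (n - k₁.val)) ::ₘ π₁.parts.map (q ^ ·)
          = (p * q ^ (n - k₂.val)) ::ₘ π₂.parts.map (q ^ ·) := congrArg Subtype.val h
      have hmem : (p * q ^ (n - k₁.val)) ∈ (p * q ^ (n - k₂.val)) ::ₘ π₂.parts.map (q ^ ·) := by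
        rw [← hm]; exact Multiset.mem_cons_self _ _
      have hkk : k₁ = k₂ := by
        rcases Multiset.mem_cons.mp hmem with he | hmem'
        · have := Nat.eq_of_mul_eq_mul_left hp.pos he
          have := hinj this
          have h1 : k₁.val ≤ n := Nat.lt_succ_iff.mp k₁.isLt
          have h2 : k₂.val ≤ n := Nat.lt_succ_iff.mp k₂.isLt
          exact Fin.ext (by omega)
        · exfalso
          obtain ⟨i, hi, he⟩ := Multiset.mem_map.mp hmem'
          have : p ∣ q ^ i := he ▸ Dvd.intro _ rfl
          exact hpq ((Nat.prime_dvd_prime_iff_eq hp hq).mp (hp.dvd_of_dvd_pow this))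
      subst hkk
      have hparts : π₁.parts = π₂.parts :=
        Multiset.map_injective hinj (Multiset.cons_inj_right _ |>.mp hm)
      exact congrArg _ (Nat.Partition.ext hparts)
    · rintro ⟨s, h2, hs⟩
      have hpdvd : p ∣ s.prod := hs ▸ Dvd.intro _ rfl
      obtain ⟨x, hxs, hpx⟩ := hp.prime.exists_mem_multiset_dvd hpdvd
      obtain ⟨s', rfl⟩ := Multiset.exists_cons_of_mem hxs
      obtain ⟨y, rfl⟩ := hpx
      rw [Multiset.prod_cons, mul_assoc] at hs
      have hys : y * s'.prod = q ^ n := Nat.eq_of_mul_eq_mul_left hp.pos hs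
      obtain ⟨b, hb, rfl⟩ := (Nat.dvd_prime_pow hq).mp ⟨s'.prod, hys.symm⟩
      have hs' : s'.prod = q ^ (n - b) := by
        have : q ^ b * s'.prod = q ^ b * q ^ (n - b) := by
          rw [hys, ← pow_add, Nat.add_sub_cancel' hb]
        exact Nat.eq_of_mul_eq_mul_left (by positivity) this
      have hz : ∀ z ∈ s', q ^ (z.factorization q) = z := fun z hzs =>
        eq_pow_factorization'' hq (hs' ▸ Multiset.dvd_prod hzs)
      have hmapback : (s'.map (fun z => z.factorization q)).map (q ^ ·) = s' := by
        rw [Multiset.map_map]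
        exact (Multiset.map_congr rfl (fun z hzs => hz z hzs)).trans (Multiset.map_id s')
      have hsum : (s'.map (fun z => z.factorization q)).sum = n - b := by
        apply hinj
        show q ^ (s'.map (fun z => z.factorization q)).sum = q ^ (n - b)
        rw [← prod_map_pow'', hmapback, hs']
      refine ⟨⟨⟨n - b, by omega⟩, ⟨s'.map (fun z => z.factorization q), ?_, hsum⟩⟩, ?_⟩
      · intro i hi
        obtain ⟨z, hzs, rfl⟩ := Multiset.mem_map.mp hi
        by_contra hcon
        have h0 : z.factorization q = 0 := by omega
        have h1 : z = 1 := by rw [← hz z hzs, h0, pow_zero]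
        have := h2 z (Multiset.mem_cons_of_mem hzs)
        omega
      · apply Subtype.ext
        simp only [hF]
        have hnb : n - (n - b) = b := by omega
        rw [hnb, hmapback]
  have hcard : numFactorizations (p * q ^ n) = Nat.card (Σ k : Fin (n+1), Nat.Partition k.val) :=
    (Nat.card_eq_of_bijective F hFbij).symm
  rw [hcard, Nat.card_eq_fintype_card, Fintype.card_sigma, ← Fin.sum_univ_eq_sum_range]
  simp [Nat.card_eq_fintype_card]
end
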